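/- Let n be a positive integer and let a, b, c be an orthonormal triple of vectors in ℝ³. Then for any real constant d, the function F : ℝ³ → ℝ defined by F(x) = d · P_n(a·x, b·x) · sin(c·x) satisfies the Helmholtz equation ΔF = −F (where Δ is the Laplacian on ℝ³). The same conclusion holds if sin is replaced by cos, and/or the polynomial P_n is replaced by Q_n. -/

import Mathlib

noncomputable section

open Real

/-- The standard harmonic polynomial `P_n(x,y) = Re((x+iy)^n)`. -/
def polyP (n : ℕ) (x y : ℝ) : ℝ := ((x + y * Complex.I) ^ n).re

/-- The standard harmonic polynomial `Q_n(x,y) = Im((x+iy)^n)`. -/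
def polyQ (n : ℕ) (x y : ℝ) : ℝ := ((x + y * Complex.I) ^ n).im

/-- Partial derivative in the `i`-th coordinate direction. -/
def pd (i : Fin 3) (F : (Fin 3 → ℝ) → ℝ) : (Fin 3 → ℝ) → ℝ :=
  fun v => deriv (fun t => F (Function.update v i t)) (v i)

/-- Divergence of a vector field on ℝ³. -/
def div3 (V : (Fin 3 → ℝ) → (Fin 3 → ℝ)) : (Fin 3 → ℝ) → ℝ :=
  fun v => pd 0 (fun w => V w 0) v + pd 1 (fun w => V w 1) v + pd 2 (fun w => V w 2) v

/-- Curl of a vector field on ℝ³. -/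
def curl3 (V : (Fin 3 → ℝ) → (Fin 3 → ℝ)) : (Fin 3 → ℝ) → (Fin 3 → ℝ) :=
  fun v => ![pd 1 (fun w => V w 2) v - pd 2 (fun w => V w 1) v,
             pd 2 (fun w => V w 0) v - pd 0 (fun w => V w 2) v,
             pd 0 (fun w => V w 1) v - pd 1 (fun w => V w 0) v]

/-- Laplacian of a scalar function on ℝ³. -/
def lap3 (F : (Fin 3 → ℝ) → ℝ) : (Fin 3 → ℝ) → ℝ :=
  fun v => pd 0 (pd 0 F) v + pd 1 (pd 1 F) v + pd 2 (pd 2 F) v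

/-- Dot product on ℝ³. -/
def dot3 (a x : Fin 3 → ℝ) : ℝ := a 0 * x 0 + a 1 * x 1 + a 2 * x 2

lemma dot_update (a v : Fin 3 → ℝ) (i : Fin 3) (t : ℝ) :
    dot3 a (Function.update v i t) = dot3 a v + a i * (t - v i) := by
  fin_cases i <;> simp [dot3, Function.update] <;> ring

def Zc (a b : Fin 3 → ℝ) (v : Fin 3 → ℝ) : ℂ := (dot3 a v : ℝ) + (dot3 b v : ℝ) * Complex.I

def Bf (a b c : Fin 3 → ℝ) (l : ℂ) (m : ℕ) (g : ℝ → ℝ) : (Fin 3 → ℝ) → ℝ :=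
  fun v => (l * (Zc a b v) ^ m).re * g (dot3 c v)

lemma hasDerivAt_dot_slice (a : Fin 3 → ℝ) (i : Fin 3) (v : Fin 3 → ℝ) :
    HasDerivAt (fun t => dot3 a (Function.update v i t)) (a i) (v i) := by
  simp only [dot_update]
  simpa using (((hasDerivAt_id (v i)).sub_const (v i)).const_mul (a i)).const_add (dot3 a v)

lemma hasDerivAt_B_slice (a b c : Fin 3 → ℝ) (l : ℂ) (m : ℕ) (g g' : ℝ → ℝ)
    (hg : ∀ t, HasDerivAt g (g' t) t) (i : Fin 3) (v : Fin 3 → ℝ) :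
    HasDerivAt (fun t => Bf a b c l m g (Function.update v i t))
      (Bf a b c (l * (m : ℂ) * (↑(a i) + ↑(b i) * Complex.I)) (m - 1) g v
        + Bf a b c (l * (↑(c i) : ℂ)) m g' v) (v i) := by
  have hz : HasDerivAt (fun t => Zc a b (Function.update v i t))
      ((↑(a i) : ℂ) + ↑(b i) * Complex.I) (v i) := by
    simp only [Zc]
    exact (hasDerivAt_dot_slice a i v).ofReal_comp.add
      ((hasDerivAt_dot_slice b i v).ofReal_comp.mul_const Complex.I)
  have hpow0 := (HasDerivAt.comp (v i)
    (hasDerivAt_pow m (Zc a b (Function.update v i (v i)))) hz).const_mul l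
  rw [Function.update_eq_self] at hpow0
  have hpow : HasDerivAt (fun t => l * Zc a b (Function.update v i t) ^ m)
      (l * ((m : ℂ) * Zc a b v ^ (m - 1) * ((↑(a i) : ℂ) + ↑(b i) * Complex.I))) (v i) := by
    simpa [Function.comp] using hpow0
  have hre : HasDerivAt (fun t => (l * Zc a b (Function.update v i t) ^ m).re)
      ((l * ((m : ℂ) * Zc a b v ^ (m - 1) * ((↑(a i) : ℂ) + ↑(b i) * Complex.I))).re) (v i) :=
    Complex.reCLM.hasFDerivAt.comp_hasDerivAt (v i) hpow
  have hgc : HasDerivAt (fun t => g (dot3 c (Function.update v i t)))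
      (g' (dot3 c v) * c i) (v i) := by
    have h2 := (hg (dot3 c (Function.update v i (v i)))).comp (v i) (hasDerivAt_dot_slice c i v)
    rw [Function.update_eq_self] at h2
    exact h2
  have hfin : HasDerivAt (fun t => (l * Zc a b (Function.update v i t) ^ m).re
      * g (dot3 c (Function.update v i t))) _ (v i) := hre.mul hgc
  convert hfin using 1
  simp only [Bf]
  simp only [Bf]
  rw [show l * (m : ℂ) * ((↑(a i) : ℂ) + ↑(b i) * Complex.I) * Zc a b v ^ (m - 1)
        = l * ((m : ℂ) * Zc a b v ^ (m - 1) * ((↑(a i) : ℂ) + ↑(b i) * Complex.I)) from by ring,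
      show l * (↑(c i) : ℂ) * Zc a b v ^ m = (↑(c i) : ℂ) * (l * Zc a b v ^ m) from by ring,
      Complex.re_ofReal_mul, Function.update_eq_self]
  ring

lemma pd_B (a b c : Fin 3 → ℝ) (l : ℂ) (m : ℕ) (g g' : ℝ → ℝ)
    (hg : ∀ t, HasDerivAt g (g' t) t) (i : Fin 3) (v : Fin 3 → ℝ) :
    pd i (Bf a b c l m g) v
      = Bf a b c (l * (m : ℂ) * (↑(a i) + ↑(b i) * Complex.I)) (m - 1) g v
        + Bf a b c (l * (↑(c i) : ℂ)) m g' v :=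
  (hasDerivAt_B_slice a b c l m g g' hg i v).deriv

lemma pd_pd_B (a b c : Fin 3 → ℝ) (l : ℂ) (m : ℕ) (g g' g'' : ℝ → ℝ)
    (hg : ∀ t, HasDerivAt g (g' t) t) (hg' : ∀ t, HasDerivAt g' (g'' t) t)
    (i : Fin 3) (v : Fin 3 → ℝ) :
    pd i (pd i (Bf a b c l m g)) v
      = (Bf a b c (l * (m : ℂ) * (↑(a i) + ↑(b i) * Complex.I) * ((m - 1 : ℕ) : ℂ)
            * (↑(a i) + ↑(b i) * Complex.I)) (m - 1 - 1) g v
          + Bf a b c (l * (m : ℂ) * (↑(a i) + ↑(b i) * Complex.I) * (↑(c i) : ℂ)) (m - 1) g' v)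
        + (Bf a b c (l * (↑(c i) : ℂ) * (m : ℕ) * (↑(a i) + ↑(b i) * Complex.I)) (m - 1) g' v
          + Bf a b c (l * (↑(c i) : ℂ) * (↑(c i) : ℂ)) m g'' v) := by
  have hrw : ∀ w', pd i (Bf a b c l m g) w'
      = Bf a b c (l * (m : ℂ) * (↑(a i) + ↑(b i) * Complex.I)) (m - 1) g w'
        + Bf a b c (l * (↑(c i) : ℂ)) m g' w' :=
    fun w' => pd_B a b c l m g g' hg i w'
  show deriv (fun t => pd i (Bf a b c l m g) (Function.update v i t)) (v i) = _
  simp only [hrw]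
  exact ((hasDerivAt_B_slice a b c _ (m - 1) g g' hg i v).add
    (hasDerivAt_B_slice a b c _ m g' g'' hg' i v)).deriv

lemma re_mul_real (X : ℂ) (s : ℝ) : X.re * s = (X * (s : ℂ)).re := by
  simp [Complex.mul_re]

lemma lap_B (a b c : Fin 3 → ℝ)
    (haa : dot3 a a = 1) (hbb : dot3 b b = 1) (hcc : dot3 c c = 1)
    (hab : dot3 a b = 0) (hac : dot3 a c = 0) (hbc : dot3 b c = 0)
    (l : ℂ) (n : ℕ) (g g' : ℝ → ℝ)
    (hg : ∀ t, HasDerivAt g (g' t) t) (hg' : ∀ t, HasDerivAt g' (-(g t)) t)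
    (v : Fin 3 → ℝ) :
    lap3 (Bf a b c l n g) v = -(Bf a b c l n g v) := by
  simp only [dot3] at haa hbb hcc hab hac hbc
  have hwC : ((↑(a 0) : ℂ) + ↑(b 0) * Complex.I) ^ 2 + ((↑(a 1) : ℂ) + ↑(b 1) * Complex.I) ^ 2
      + ((↑(a 2) : ℂ) + ↑(b 2) * Complex.I) ^ 2 = 0 := by
    apply Complex.ext <;>
      simp only [pow_two, Complex.add_re, Complex.add_im, Complex.mul_re, Complex.mul_im,
        Complex.I_re, Complex.I_im, Complex.ofReal_re, Complex.ofReal_im, Complex.zero_re,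
        Complex.zero_im]
    · linear_combination haa - hbb
    · linear_combination 2 * hab
  have hcwC : (↑(c 0) : ℂ) * ((↑(a 0) : ℂ) + ↑(b 0) * Complex.I)
      + (↑(c 1) : ℂ) * ((↑(a 1) : ℂ) + ↑(b 1) * Complex.I)
      + (↑(c 2) : ℂ) * ((↑(a 2) : ℂ) + ↑(b 2) * Complex.I) = 0 := by
    apply Complex.ext <;>
      simp only [Complex.add_re, Complex.add_im, Complex.mul_re, Complex.mul_im,
        Complex.I_re, Complex.I_im, Complex.ofReal_re, Complex.ofReal_im, Complex.zero_re,
        Complex.zero_im]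
    · linear_combination hac
    · linear_combination hbc
  have hccC : ((↑(c 0) : ℂ)) * ↑(c 0) + ((↑(c 1) : ℂ)) * ↑(c 1) + ((↑(c 2) : ℂ)) * ↑(c 2) = 1 := by
    have : (c 0) * (c 0) + (c 1) * (c 1) + (c 2) * (c 2) = (1 : ℝ) := by linear_combination hcc
    exact_mod_cast this
  unfold lap3
  rw [pd_pd_B a b c l n g g' (fun t => -(g t)) hg hg' 0 v,
      pd_pd_B a b c l n g g' (fun t => -(g t)) hg hg' 1 v,
      pd_pd_B a b c l n g g' (fun t => -(g t)) hg hg' 2 v]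
  simp only [Bf]
  simp only [mul_neg]
  simp only [re_mul_real]
  simp only [← Complex.neg_re, ← Complex.add_re]
  apply congrArg Complex.re
  linear_combination (l * (n : ℂ) * ((n - 1 : ℕ) : ℂ) * Zc a b v ^ (n - 1 - 1)
        * ((g (dot3 c v) : ℝ) : ℂ)) * hwC
    + (2 * l * (n : ℂ) * Zc a b v ^ (n - 1) * ((g' (dot3 c v) : ℝ) : ℂ)) * hcwC
    - (l * Zc a b v ^ n * ((g (dot3 c v) : ℝ) : ℂ)) * hccC

/-- For an orthonormal triple `a, b, c` in ℝ³ and any `d ∈ ℝ`, the function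
`x ↦ d · P_n(a·x, b·x) · sin(c·x)` satisfies the Helmholtz equation `ΔF = -F`;
the same holds with `cos` in place of `sin` and/or `Q_n` in place of `P_n`. -/
theorem helmholtz_solutions (n : ℕ) (hn : 0 < n) (a b c : Fin 3 → ℝ)
    (haa : dot3 a a = 1) (hbb : dot3 b b = 1) (hcc : dot3 c c = 1)
    (hab : dot3 a b = 0) (hac : dot3 a c = 0) (hbc : dot3 b c = 0)
    (d : ℝ) :
    (∀ v, lap3 (fun x => d * polyP n (dot3 a x) (dot3 b x) * Real.sin (dot3 c x)) v
        = -(d * polyP n (dot3 a v) (dot3 b v) * Real.sin (dot3 c v))) ∧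
    (∀ v, lap3 (fun x => d * polyP n (dot3 a x) (dot3 b x) * Real.cos (dot3 c x)) v
        = -(d * polyP n (dot3 a v) (dot3 b v) * Real.cos (dot3 c v))) ∧
    (∀ v, lap3 (fun x => d * polyQ n (dot3 a x) (dot3 b x) * Real.sin (dot3 c x)) v
        = -(d * polyQ n (dot3 a v) (dot3 b v) * Real.sin (dot3 c v))) ∧
    (∀ v, lap3 (fun x => d * polyQ n (dot3 a x) (dot3 b x) * Real.cos (dot3 c x)) v
        = -(d * polyQ n (dot3 a v) (dot3 b v) * Real.cos (dot3 c v))) := by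
  have hsin : ∀ t, HasDerivAt Real.sin (Real.cos t) t := Real.hasDerivAt_sin
  have hcos : ∀ t, HasDerivAt Real.cos (-(Real.sin t)) t := Real.hasDerivAt_cos
  have hnsin : ∀ t, HasDerivAt (fun t => -(Real.sin t)) (-(Real.cos t)) t :=
    fun t => (Real.hasDerivAt_sin t).neg
  have hP : ∀ g : ℝ → ℝ, (fun x => d * polyP n (dot3 a x) (dot3 b x) * g (dot3 c x))
      = Bf a b c ((d : ℂ)) n g := by
    intro g; funext x
    simp [Bf, polyP, Zc, Complex.re_ofReal_mul]
  have hQ : ∀ g : ℝ → ℝ, (fun x => d * polyQ n (dot3 a x) (dot3 b x) * g (dot3 c x))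
      = Bf a b c (-Complex.I * (d : ℂ)) n g := by
    intro g; funext x
    simp [Bf, polyQ, Zc, Complex.mul_re, Complex.mul_im, Complex.neg_re, Complex.neg_im,
      Complex.I_re, Complex.I_im, Complex.ofReal_re, Complex.ofReal_im]
  refine ⟨fun v => ?_, fun v => ?_, fun v => ?_, fun v => ?_⟩
  · rw [hP Real.sin, lap_B a b c haa hbb hcc hab hac hbc _ n Real.sin Real.cos hsin hcos v]
    exact congrArg Neg.neg (congrFun (hP Real.sin) v).symm
  · rw [hP Real.cos, lap_B a b c haa hbb hcc hab hac hbc _ n Real.cos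
      (fun t => -(Real.sin t)) hcos hnsin v]
    exact congrArg Neg.neg (congrFun (hP Real.cos) v).symm
  · rw [hQ Real.sin, lap_B a b c haa hbb hcc hab hac hbc _ n Real.sin Real.cos hsin hcos v]
    exact congrArg Neg.neg (congrFun (hQ Real.sin) v).symm
  · rw [hQ Real.cos, lap_B a b c haa hbb hcc hab hac hbc _ n Real.cos
      (fun t => -(Real.sin t)) hcos hnsin v]
    exact congrArg Neg.neg (congrFun (hQ Real.cos) v).symm
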